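/- Let G be a group of increasing homeomorphisms of ℝ that is uniformly quasisymmetric: there exists k ≥ 1 such that every g ∈ G is k-quasisymmetric. Suppose g ∈ G fixes 0 and has a fixed point y < 0 with g(x) > x for all x ∈ (-1, y) and g(-1) > -1, g(-1) < y. Then one obtains a contradiction; i.e., no such g exists in G. -/

import Mathlib

/-- `f` is `k`-quasisymmetric. -/
def QS (k : ℝ) (f : ℝ → ℝ) : Prop :=
  ∀ x t : ℝ, 0 < t →
    1 / k ≤ (f (x + t) - f x) / (f x - f (x - t)) ∧
    (f (x + t) - f x) / (f x - f (x - t)) ≤ k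

/-- Key distortion estimate: any `k`-quasisymmetric increasing map fixing `y` and `0`
satisfies `-y ≤ k * (1+k)^m * (y - f (-1))` once `2^m * (y+1) > -y`. -/
lemma qs_key (k : ℝ) (hk : 1 ≤ k) (y : ℝ) (hy1 : -1 < y) (hy0 : y < 0)
    (m : ℕ) (hm : -y < 2 ^ m * (y + 1))
    (f : ℝ → ℝ) (hf : StrictMono f) (hqs : QS k f) (hfy : f y = y) (hf0 : f 0 = 0) :
    -y ≤ k * (1 + k) ^ m * (y - f (-1)) := by
  have k0 : (0 : ℝ) < k := lt_of_lt_of_le one_pos hk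
  have ht : (0 : ℝ) < y + 1 := by linarith
  have hd : 0 < y - f (-1) := by
    have := hf hy1
    rw [hfy] at this
    linarith
  set t : ℝ := y + 1 with htdef
  set d : ℝ := y - f (-1) with hddef
  -- step 1: f (y + t) - y ≤ k * d
  have step1 : f (y + t) - y ≤ k * d := by
    have h := (hqs y t ht).2
    have hyt : y - t = -1 := by rw [htdef]; ring
    rw [hyt, hfy] at h
    calc f (y + t) - y = (f (y + t) - y) / d * d := by field_simp
    _ ≤ k * d := by
        apply mul_le_mul_of_nonneg_right _ hd.le
        exact h
  -- step 2 by induction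
  have step2 : ∀ i : ℕ, f (y + 2 ^ i * t) - y ≤ (1 + k) ^ i * (k * d) := by
    intro i
    induction i with
    | zero => simpa using step1
    | succ i ih =>
      set s : ℝ := 2 ^ i * t with hsdef
      have hs : 0 < s := by positivity
      have hden : 0 < f (y + s) - y := by
        have := hf (show y < y + s by linarith)
        rw [hfy] at this; linarith
      have h := (hqs (y + s) s hs).2
      have e1 : y + s - s = y := by ring
      rw [e1, hfy] at h
      have hmul : f (y + s + s) - f (y + s) ≤ k * (f (y + s) - y) :=
        (div_le_iff₀ hden).mp h
      have e2 : y + 2 ^ (i + 1) * t = y + s + s := by rw [hsdef]; ring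
      rw [e2]
      have : f (y + s + s) - y ≤ (1 + k) * (f (y + s) - y) := by linarith
      calc f (y + s + s) - y ≤ (1 + k) * (f (y + s) - y) := this
      _ ≤ (1 + k) * ((1 + k) ^ i * (k * d)) := by
          apply mul_le_mul_of_nonneg_left ih (by linarith)
      _ = (1 + k) ^ (i + 1) * (k * d) := by ring
  -- step 3
  have hpos : (0 : ℝ) < y + 2 ^ m * t := by linarith [hm]
  have hfpos : 0 < f (y + 2 ^ m * t) := by
    have := hf hpos
    rwa [hf0] at this
  have := step2 m
  nlinarith [this, hfpos]

theorem stmt_9 (G : Subgroup (Equiv.Perm ℝ)) (k : ℝ) (hk : 1 ≤ k)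
    (hG : ∀ h ∈ G, StrictMono ⇑h ∧ Continuous ⇑h ∧ QS k ⇑h)
    (g : Equiv.Perm ℝ) (hg : g ∈ G) (hg0 : g 0 = 0)
    (y : ℝ) (hy : y < 0) (hfix : g y = y)
    (hpush : ∀ x ∈ Set.Ioo (-1 : ℝ) y, x < g x)
    (h1 : -1 < g (-1)) (h2 : g (-1) < y) :
    False := by
  have hy1 : (-1 : ℝ) < y := lt_trans h1 h2
  obtain ⟨hgm, hgc, _⟩ := hG g hg
  -- choose m
  have h2lt : (1 : ℝ) < 2 := one_lt_two
  obtain ⟨m, hm⟩ := pow_unbounded_of_one_lt (R := ℝ) ((-y) / (y + 1)) h2lt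
  have ht : (0 : ℝ) < y + 1 := by linarith
  have hm' : -y < 2 ^ m * (y + 1) := by
    rw [div_lt_iff₀ ht] at hm
    linarith
  set C : ℝ := k * (1 + k) ^ m with hCdef
  have hC : 0 < C := by positivity
  -- the sequence of iterates
  set a : ℕ → ℝ := fun n => (⇑g)^[n] (g (-1)) with hadef
  have hasucc : ∀ n, a (n + 1) = g (a n) := by
    intro n; exact Function.iterate_succ_apply' (⇑g) n (g (-1))
  have haIoo : ∀ n, a n ∈ Set.Ioo (-1 : ℝ) y := by
    intro n
    induction n with
    | zero => exact ⟨h1, h2⟩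
    | succ n ih =>
      rw [hasucc]
      refine ⟨lt_trans ih.1 (hpush _ ih), ?_⟩
      have := hgm ih.2
      rwa [hfix] at this
  have hamono : StrictMono a := by
    apply strictMono_nat_of_lt_succ
    intro n
    rw [hasucc]
    exact hpush _ (haIoo n)
  have hbdd : BddAbove (Set.range a) := by
    refine ⟨y, ?_⟩
    rintro z ⟨n, rfl⟩
    exact (haIoo n).2.le
  set L : ℝ := ⨆ n, a n with hLdef
  have htend : Filter.Tendsto a Filter.atTop (nhds L) :=
    tendsto_atTop_ciSup hamono.monotone hbdd
  have htend2 : Filter.Tendsto (fun n => a (n + 1)) Filter.atTop (nhds L) :=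
    htend.comp (Filter.tendsto_add_atTop_nat 1)
  have htend3 : Filter.Tendsto (fun n => g (a n)) Filter.atTop (nhds (g L)) :=
    (hgc.tendsto L).comp htend
  have hgL : g L = L := by
    apply tendsto_nhds_unique _ htend2
    simpa [hasucc] using htend3
  have hLy : L ≤ y := ciSup_le fun n => (haIoo n).2.le
  have hL1 : -1 < L := lt_of_lt_of_le (haIoo 0).1 (le_ciSup hbdd 0)
  have hLeq : L = y := by
    by_contra hne
    have hLlt : L < y := lt_of_le_of_ne hLy hne
    have := hpush L ⟨hL1, hLlt⟩
    rw [hgL] at this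
    exact lt_irrefl _ this
  -- apply the key lemma to every iterate
  have hkey : ∀ n : ℕ, -y ≤ C * (y - a n) := by
    intro n
    have hmem : g ^ (n + 1) ∈ G := pow_mem hg (n + 1)
    obtain ⟨hfm, _, hfqs⟩ := hG _ hmem
    have hc : ⇑(g ^ (n + 1)) = (⇑g)^[n + 1] := Equiv.Perm.coe_pow g (n + 1)
    have hfy : (g ^ (n + 1)) y = y := by
      rw [hc]; exact Function.iterate_fixed hfix (n + 1)
    have hf0 : (g ^ (n + 1)) 0 = 0 := by
      rw [hc]; exact Function.iterate_fixed hg0 (n + 1)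
    have hfneg : (g ^ (n + 1)) (-1) = a n := by
      rw [hc, Function.iterate_succ_apply]
    have := qs_key k hk y hy1 hy m hm' _ hfm hfqs hfy hf0
    rwa [hfneg] at this
  -- contradiction
  have htend4 : Filter.Tendsto (fun n => C * (y - a n)) Filter.atTop (nhds (C * (y - L))) :=
    (tendsto_const_nhds.mul (tendsto_const_nhds.sub htend))
  have hle : -y ≤ C * (y - L) := ge_of_tendsto' htend4 hkey
  rw [hLeq] at hle
  simp at hle
  linarith
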